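/- Let A ∈ ℝ^{m×n}, b ∈ ℝ^m, c ∈ ℝ^n, let x, s ∈ ℝ^n have strictly positive entries, set μ := xᵀs/n, and let θ ≥ 0, β₁ ∈ ℝ, η ≥ 0. Let (x*, y*, s*) satisfy A x* = b and Aᵀ y* + s* = c, let (x⁰, y⁰, s⁰) be arbitrary with R_P⁰ := b − A x⁰ and R_D⁰ := c − Aᵀ y⁰ − s⁰, and suppose (Δx, Δy, Δs) and v ∈ ℝⁿ satisfy A Δx = θ R_P⁰, Aᵀ Δy + Δs = θ R_D⁰, X Δs + S Δx = β₁ μ e − X S e − S v, and ‖S v‖₂ ≤ η μ. Then ‖D⁻¹ Δx‖₂ ≤ (‖X S e − β₁ μ e‖₂ + η μ) / √(min_i x_i s_i) + 2 θ (‖D⁻¹ (x⁰ − x*)‖₂ + ‖D (s⁰ − s*)‖₂), and the same upper bound holds for ‖D Δs‖₂. -/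

import Mathlib

open Matrix

noncomputable def nrm {n : ℕ} (f : Fin n → ℝ) : ℝ := Real.sqrt (∑ i, f i ^ 2)

lemma nrm_eq_norm {n : ℕ} (f : Fin n → ℝ) :
    nrm f = ‖(WithLp.equiv 2 (Fin n → ℝ)).symm f‖ := by
  rw [EuclideanSpace.norm_eq]
  simp [nrm, sq_abs]

lemma nrm_nonneg {n : ℕ} (f : Fin n → ℝ) : 0 ≤ nrm f := Real.sqrt_nonneg _

lemma nrm_add_le {n : ℕ} (f g : Fin n → ℝ) :
    nrm (fun i => f i + g i) ≤ nrm f + nrm g := by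
  rw [nrm_eq_norm, nrm_eq_norm, nrm_eq_norm]
  exact norm_add_le ((WithLp.equiv 2 (Fin n → ℝ)).symm f) ((WithLp.equiv 2 (Fin n → ℝ)).symm g)

lemma nrm_smul {n : ℕ} (θ : ℝ) (hθ : 0 ≤ θ) (f : Fin n → ℝ) :
    nrm (fun i => θ * f i) = θ * nrm f := by
  rw [nrm_eq_norm, nrm_eq_norm]
  have : (WithLp.equiv 2 (Fin n → ℝ)).symm (fun i => θ * f i)
      = θ • (WithLp.equiv 2 (Fin n → ℝ)).symm f := rfl
  rw [this, norm_smul, Real.norm_eq_abs, abs_of_nonneg hθ]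

/-- Step 2 of the lemma bounding the complementarity terms: the
scaled Newton directions `D⁻¹Δx` and `DΔs` are bounded in terms of the
centrality quantities and the distance from the starting point to a
primal–dual optimal solution. Here `D = X^{1/2}S^{-1/2}`, so
`(D⁻¹u)_i = √(s_i/x_i) u_i` and `(Dw)_i = √(x_i/s_i) w_i`. -/
theorem scaled_direction_bound
    {m n : ℕ} (hn : 0 < n)
    (A : Matrix (Fin m) (Fin n) ℝ) (b : Fin m → ℝ) (c : Fin n → ℝ)
    (x s : Fin n → ℝ) (hx : ∀ i, 0 < x i) (hs : ∀ i, 0 < s i)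
    (μ : ℝ) (hμ : μ = (∑ i, x i * s i) / (n : ℝ))
    (θ β₁ η : ℝ) (hθ : 0 ≤ θ) (hη : 0 ≤ η)
    (xstar sstar : Fin n → ℝ) (ystar : Fin m → ℝ)
    (hPstar : A.mulVec xstar = b)
    (hDstar : Aᵀ.mulVec ystar + sstar = c)
    (x0 s0 : Fin n → ℝ) (y0 : Fin m → ℝ)
    (RP0 : Fin m → ℝ) (RD0 : Fin n → ℝ)
    (hRP0 : RP0 = b - A.mulVec x0)
    (hRD0 : RD0 = c - Aᵀ.mulVec y0 - s0)
    (Δx Δs : Fin n → ℝ) (Δy : Fin m → ℝ) (v : Fin n → ℝ)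
    (h1 : A.mulVec Δx = θ • RP0)
    (h2 : Aᵀ.mulVec Δy + Δs = θ • RD0)
    (h3 : ∀ i, x i * Δs i + s i * Δx i = β₁ * μ - x i * s i - s i * v i)
    (h4 : Real.sqrt (∑ i, (s i * v i) ^ 2) ≤ η * μ) :
    Real.sqrt (∑ i, (Real.sqrt (s i / x i) * Δx i) ^ 2)
      ≤ (Real.sqrt (∑ i, (x i * s i - β₁ * μ) ^ 2) + η * μ)
          / Real.sqrt (Finset.univ.inf' (Finset.univ_nonempty_iff.mpr
              ⟨⟨0, hn⟩⟩) fun i => x i * s i)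
        + 2 * θ * (Real.sqrt (∑ i, (Real.sqrt (s i / x i) * (x0 i - xstar i)) ^ 2)
            + Real.sqrt (∑ i, (Real.sqrt (x i / s i) * (s0 i - sstar i)) ^ 2)) ∧
    Real.sqrt (∑ i, (Real.sqrt (x i / s i) * Δs i) ^ 2)
      ≤ (Real.sqrt (∑ i, (x i * s i - β₁ * μ) ^ 2) + η * μ)
          / Real.sqrt (Finset.univ.inf' (Finset.univ_nonempty_iff.mpr
              ⟨⟨0, hn⟩⟩) fun i => x i * s i)
        + 2 * θ * (Real.sqrt (∑ i, (Real.sqrt (s i / x i) * (x0 i - xstar i)) ^ 2)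
            + Real.sqrt (∑ i, (Real.sqrt (x i / s i) * (s0 i - sstar i)) ^ 2)) := by
  -- abbreviations
  set mm : ℝ := Finset.univ.inf' (Finset.univ_nonempty_iff.mpr ⟨⟨0, hn⟩⟩)
      (fun i => x i * s i) with hmm
  have hmm_pos : 0 < mm := by
    rw [hmm]
    exact (Finset.lt_inf'_iff _).mpr fun i _ => mul_pos (hx i) (hs i)
  have hmm_le : ∀ i, mm ≤ x i * s i := fun i => Finset.inf'_le _ (Finset.mem_univ i)
  have hsqmm : 0 < Real.sqrt mm := Real.sqrt_pos.mpr hmm_pos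
  set u : Fin n → ℝ := fun i => Real.sqrt (s i / x i) * (Δx i + θ * (x0 i - xstar i))
    with hu
  set w : Fin n → ℝ := fun i => Real.sqrt (x i / s i) * (Δs i + θ * (s0 i - sstar i))
    with hw
  set q1 : Fin n → ℝ := fun i => Real.sqrt (s i / x i) * (x0 i - xstar i) with hq1
  set q2 : Fin n → ℝ := fun i => Real.sqrt (x i / s i) * (s0 i - sstar i) with hq2
  set p : Fin n → ℝ := fun i => (β₁ * μ - x i * s i - s i * v i) / Real.sqrt (x i * s i)
    with hp
  -- orthogonality
  have hco : ∀ i, Real.sqrt (s i / x i) * Real.sqrt (x i / s i) = 1 := by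
    intro i
    rw [← Real.sqrt_mul (div_nonneg (hs i).le (hx i).le)]
    have : s i / x i * (x i / s i) = 1 := by
      rw [div_mul_div_comm, mul_comm (s i) (x i)]
      exact div_self (mul_ne_zero (hx i).ne' (hs i).ne')
    rw [this, Real.sqrt_one]
  have hA0 : A.mulVec (Δx + θ • (x0 - xstar)) = 0 := by
    rw [Matrix.mulVec_add, Matrix.mulVec_smul, Matrix.mulVec_sub, h1, hRP0, hPstar]
    module
  have hsstar : sstar = c - Aᵀ.mulVec ystar := by rw [← hDstar]; abel
  have hΔs : Δs = θ • RD0 - Aᵀ.mulVec Δy := by rw [← h2]; abel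
  have hz : Δs + θ • (s0 - sstar) = -(Aᵀ.mulVec (Δy + θ • (y0 - ystar))) := by
    rw [hΔs, hRD0, hsstar, Matrix.mulVec_add, Matrix.mulVec_smul, Matrix.mulVec_sub]
    module
  have horth : ∑ i, u i * w i = 0 := by
    have h5 : ∀ i ∈ Finset.univ, u i * w i
        = (Δx + θ • (x0 - xstar)) i * (Δs + θ • (s0 - sstar)) i := by
      intro i _
      have : (Δx + θ • (x0 - xstar)) i = Δx i + θ * (x0 i - xstar i) := by
        simp [smul_eq_mul]
      rw [this]
      have : (Δs + θ • (s0 - sstar)) i = Δs i + θ * (s0 i - sstar i) := by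
        simp [smul_eq_mul]
      rw [this, hu, hw]
      calc Real.sqrt (s i / x i) * (Δx i + θ * (x0 i - xstar i)) *
            (Real.sqrt (x i / s i) * (Δs i + θ * (s0 i - sstar i)))
          = (Real.sqrt (s i / x i) * Real.sqrt (x i / s i)) *
            ((Δx i + θ * (x0 i - xstar i)) * (Δs i + θ * (s0 i - sstar i))) := by ring
        _ = (Δx i + θ * (x0 i - xstar i)) * (Δs i + θ * (s0 i - sstar i)) := by
            rw [hco i]; ring
    rw [Finset.sum_congr rfl h5]
    have : ∑ i, (Δx + θ • (x0 - xstar)) i * (Δs + θ • (s0 - sstar)) i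
        = (Δx + θ • (x0 - xstar)) ⬝ᵥ (Δs + θ • (s0 - sstar)) := rfl
    rw [this, hz, dotProduct_neg, Matrix.dotProduct_mulVec,
        Matrix.vecMul_transpose, hA0]
    simp
  -- key componentwise identity
  have hkey : ∀ i, u i + w i = p i + θ * q1 i + θ * q2 i := by
    intro i
    obtain ⟨X, hX0, hXx⟩ : ∃ X, 0 < X ∧ x i = X ^ 2 :=
      ⟨Real.sqrt (x i), Real.sqrt_pos.mpr (hx i), (Real.sq_sqrt (hx i).le).symm⟩
    obtain ⟨S, hS0, hSs⟩ : ∃ S, 0 < S ∧ s i = S ^ 2 :=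
      ⟨Real.sqrt (s i), Real.sqrt_pos.mpr (hs i), (Real.sq_sqrt (hs i).le).symm⟩
    have h3' := h3 i
    rw [hu, hw, hp, hq1, hq2]
    simp only
    rw [hXx, hSs] at h3' ⊢
    have e1 : Real.sqrt (S ^ 2 / X ^ 2) = S / X := by
      rw [← div_pow, Real.sqrt_sq (div_nonneg hS0.le hX0.le)]
    have e2 : Real.sqrt (X ^ 2 / S ^ 2) = X / S := by
      rw [← div_pow, Real.sqrt_sq (div_nonneg hX0.le hS0.le)]
    have e3 : Real.sqrt (X ^ 2 * S ^ 2) = X * S := by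
      rw [← mul_pow, Real.sqrt_sq (mul_nonneg hX0.le hS0.le)]
    rw [e1, e2, e3, ← h3']
    field_simp
    ring
  -- Pythagoras
  have hexp : ∑ i, (u i + w i) ^ 2 = ∑ i, u i ^ 2 + ∑ i, w i ^ 2 := by
    have h6 : ∀ i ∈ Finset.univ, (u i + w i) ^ 2
        = u i ^ 2 + w i ^ 2 + 2 * (u i * w i) := fun i _ => by ring
    rw [Finset.sum_congr rfl h6, Finset.sum_add_distrib, Finset.sum_add_distrib,
        ← Finset.mul_sum, horth]
    ring
  have hu_le : nrm u ≤ nrm (fun i => u i + w i) := by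
    apply Real.sqrt_le_sqrt
    rw [hexp]
    have := Finset.sum_nonneg (fun i (_ : i ∈ Finset.univ) => sq_nonneg (w i))
    linarith
  have hw_le : nrm w ≤ nrm (fun i => u i + w i) := by
    apply Real.sqrt_le_sqrt
    rw [hexp]
    have := Finset.sum_nonneg (fun i (_ : i ∈ Finset.univ) => sq_nonneg (u i))
    linarith
  -- bound on nrm (u + w)
  set p1 : Fin n → ℝ := fun i => -(x i * s i - β₁ * μ) / Real.sqrt (x i * s i) with hp1
  set p2 : Fin n → ℝ := fun i => -(s i * v i) / Real.sqrt (x i * s i) with hp2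
  have hpsplit : ∀ i, p i = p1 i + p2 i := by
    intro i
    rw [hp, hp1, hp2]
    simp only
    rw [← add_div]
    ring_nf
  have hp1_bound : nrm p1 ≤ Real.sqrt (∑ i, (x i * s i - β₁ * μ) ^ 2) / Real.sqrt mm := by
    rw [← Real.sqrt_div (Finset.sum_nonneg fun i _ => sq_nonneg _)]
    apply Real.sqrt_le_sqrt
    rw [Finset.sum_div]
    apply Finset.sum_le_sum
    intro i _
    have hxsi : 0 < x i * s i := mul_pos (hx i) (hs i)
    have : p1 i ^ 2 = (x i * s i - β₁ * μ) ^ 2 / (x i * s i) := by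
      rw [hp1]; simp only
      rw [neg_div, neg_sq, div_pow, Real.sq_sqrt hxsi.le]
    rw [this]
    exact div_le_div_of_nonneg_left (sq_nonneg _) hmm_pos (hmm_le i)
  have hp2_bound : nrm p2 ≤ η * μ / Real.sqrt mm := by
    have step1 : nrm p2 ≤ Real.sqrt (∑ i, (s i * v i) ^ 2) / Real.sqrt mm := by
      rw [← Real.sqrt_div (Finset.sum_nonneg fun i _ => sq_nonneg _)]
      apply Real.sqrt_le_sqrt
      rw [Finset.sum_div]
      apply Finset.sum_le_sum
      intro i _
      have hxsi : 0 < x i * s i := mul_pos (hx i) (hs i)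
      have : p2 i ^ 2 = (s i * v i) ^ 2 / (x i * s i) := by
        rw [hp2]; simp only
        rw [neg_div, neg_sq, div_pow, Real.sq_sqrt hxsi.le]
      rw [this]
      exact div_le_div_of_nonneg_left (sq_nonneg _) hmm_pos (hmm_le i)
    exact step1.trans ((div_le_div_iff_of_pos_right hsqmm).mpr h4)
  have hp_bound : nrm p
      ≤ (Real.sqrt (∑ i, (x i * s i - β₁ * μ) ^ 2) + η * μ) / Real.sqrt mm := by
    have : nrm p = nrm (fun i => p1 i + p2 i) := by
      congr 1; funext i; exact hpsplit i
    rw [this, add_div]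
    exact (nrm_add_le p1 p2).trans (add_le_add hp1_bound hp2_bound)
  have huw_bound : nrm (fun i => u i + w i)
      ≤ (Real.sqrt (∑ i, (x i * s i - β₁ * μ) ^ 2) + η * μ) / Real.sqrt mm
        + θ * nrm q1 + θ * nrm q2 := by
    have e : nrm (fun i => u i + w i)
        = nrm (fun i => (p i + θ * q1 i) + θ * q2 i) := by
      congr 1; funext i; rw [hkey i]
    rw [e]
    calc nrm (fun i => (p i + θ * q1 i) + θ * q2 i)
        ≤ nrm (fun i => p i + θ * q1 i) + nrm (fun i => θ * q2 i) :=
          nrm_add_le _ _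
      _ ≤ nrm p + nrm (fun i => θ * q1 i) + nrm (fun i => θ * q2 i) := by
          have := nrm_add_le p (fun i => θ * q1 i)
          linarith
      _ = nrm p + θ * nrm q1 + θ * nrm q2 := by
          rw [nrm_smul θ hθ, nrm_smul θ hθ]
      _ ≤ _ := by linarith [hp_bound]
  -- final assembly
  have hq1n := nrm_nonneg q1
  have hq2n := nrm_nonneg q2
  have hDx : nrm (fun i => Real.sqrt (s i / x i) * Δx i) ≤ nrm u + θ * nrm q1 := by
    have e : (fun i => Real.sqrt (s i / x i) * Δx i)
        = fun i => u i + θ * (-(q1 i)) := by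
      funext i; rw [hu, hq1]; simp only; ring
    rw [e]
    have hneg : nrm (fun i => -(q1 i)) = nrm q1 := by
      simp only [nrm, neg_sq]
    calc nrm (fun i => u i + θ * (-(q1 i)))
        ≤ nrm u + nrm (fun i => θ * (-(q1 i))) := nrm_add_le _ _
      _ = nrm u + θ * nrm q1 := by rw [nrm_smul θ hθ, hneg]
  have hDs : nrm (fun i => Real.sqrt (x i / s i) * Δs i) ≤ nrm w + θ * nrm q2 := by
    have e : (fun i => Real.sqrt (x i / s i) * Δs i)
        = fun i => w i + θ * (-(q2 i)) := by
      funext i; rw [hw, hq2]; simp only; ring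
    rw [e]
    have hneg : nrm (fun i => -(q2 i)) = nrm q2 := by
      simp only [nrm, neg_sq]
    calc nrm (fun i => w i + θ * (-(q2 i)))
        ≤ nrm w + nrm (fun i => θ * (-(q2 i))) := nrm_add_le _ _
      _ = nrm w + θ * nrm q2 := by rw [nrm_smul θ hθ, hneg]
  have H1 : nrm (fun i => Real.sqrt (s i / x i) * Δx i)
      ≤ (Real.sqrt (∑ i, (x i * s i - β₁ * μ) ^ 2) + η * μ) / Real.sqrt mm
        + 2 * θ * (nrm q1 + nrm q2) := by
    have h7 := hu_le.trans huw_bound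
    linarith [mul_nonneg hθ hq2n, mul_nonneg hθ hq1n]
  have H2 : nrm (fun i => Real.sqrt (x i / s i) * Δs i)
      ≤ (Real.sqrt (∑ i, (x i * s i - β₁ * μ) ^ 2) + η * μ) / Real.sqrt mm
        + 2 * θ * (nrm q1 + nrm q2) := by
    have h7 := hw_le.trans huw_bound
    linarith [mul_nonneg hθ hq2n, mul_nonneg hθ hq1n]
  constructor
  · simpa only [nrm, hq1, hq2] using H1
  · simpa only [nrm, hq1, hq2] using H2
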